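/- Let R be a ring with a descending G-filtration over an ordered group (G,<). Then the set G_1 = {g ∈ G : g ≤ 1}, viewed inside the Rees ring Rees(R), is an Ore subset of Rees(R), and the Ore localization G_1^{-1} Rees(R) is isomorphic to the group ring R[G]. -/

import Mathlib

section aux

variable {R : Type} [Ring R] {G : Type} [Group G] [LinearOrder G]
    [CovariantClass G G (· * ·) (· < ·)]
    [CovariantClass G G (Function.swap (· * ·)) (· < ·)]

lemma rees_single_mem
    (F : G → Set R)
    (hzero : ∀ g : G, (0 : R) ∈ F g)
    (hF1 : ∀ g h : G, g ≤ h → F h ⊆ F g)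
    (hF3 : (1 : R) ∈ F 1)
    (S : Subring (MonoidAlgebra R G))
    (hS : ∀ f : MonoidAlgebra R G, f ∈ S ↔ ∀ g : G, f.coeff g ∈ F g)
    (g : G) (hg : g ≤ 1) :
    (MonoidAlgebra.single g (1 : R) : MonoidAlgebra R G) ∈ S := by
  rw [hS]
  intro h
  classical
  rw [MonoidAlgebra.single_apply]
  split_ifs with he
  · subst he; exact hF1 g 1 hg hF3
  · exact hzero h

end aux

/-- Let `R` be a ring with a descending `G`-filtration over an ordered
group `(G,<)`, and `Rees(R)` its Rees ring, realized as the subring `S` of the group ring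
`R[G]` of elements whose `g`-coefficient lies in `F g`.  Then the set
`G₁ = {g ∈ G : g ≤ 1}`, viewed inside `S` as the elements `(1)·g`, is a multiplicatively
closed subset of `S` satisfying the Ore condition, and the Ore localization
`G₁⁻¹ Rees(R)` is the group ring `R[G]`: every element of `R[G]` becomes an element of
the Rees ring after multiplying by a suitable denominator from `G₁`. -/
theorem rees_ring_localization_at_G1_is_group_ring
    (R : Type) [Ring R]
    (G : Type) [Group G] [LinearOrder G]
    [CovariantClass G G (· * ·) (· < ·)]
    [CovariantClass G G (Function.swap (· * ·)) (· < ·)]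
    (F : G → Set R)
    (hsub : ∀ g : G, (0 : R) ∈ F g ∧ (∀ x y, x ∈ F g → y ∈ F g → x + y ∈ F g) ∧
        (∀ x, x ∈ F g → -x ∈ F g))
    (hF1 : ∀ g h : G, g ≤ h → F h ⊆ F g)
    (hF2 : ∀ g h : G, ∀ x ∈ F g, ∀ y ∈ F h, x * y ∈ F (g * h))
    (hF3 : (1 : R) ∈ F 1)
    (hF4 : ∀ x : R, ∃ g : G, x ∈ F g)
    -- the Rees ring, as a subring of the group ring `R[G]`
    (S : Subring (MonoidAlgebra R G))
    (hS : ∀ f : MonoidAlgebra R G, f ∈ S ↔ ∀ g : G, f.coeff g ∈ F g) :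
    -- `G₁` lies in the Rees ring and is multiplicatively closed
    (∀ g : G, g ≤ 1 → (MonoidAlgebra.single g (1 : R) : MonoidAlgebra R G) ∈ S) ∧
    (∀ g h : G, g ≤ 1 → h ≤ 1 →
      (MonoidAlgebra.single g (1 : R) : MonoidAlgebra R G) * MonoidAlgebra.single h 1
        = MonoidAlgebra.single (g * h) 1) ∧
    -- the Ore condition for `G₁` in `S`
    (∀ f : MonoidAlgebra R G, f ∈ S → ∀ g : G, g ≤ 1 →
      ∃ h : G, h ≤ 1 ∧ ∃ f' : MonoidAlgebra R G, f' ∈ S ∧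
        (MonoidAlgebra.single h (1 : R) : MonoidAlgebra R G) * f
          = f' * MonoidAlgebra.single g 1) ∧
    -- `G₁⁻¹ Rees(R) = R[G]`: every element of the group ring is a left fraction
    (∀ f : MonoidAlgebra R G, ∃ g : G, g ≤ 1 ∧
      (MonoidAlgebra.single g (1 : R) : MonoidAlgebra R G) * f ∈ S) := by
  classical
  have I1 : CovariantClass G G (· * ·) (· ≤ ·) := covariantClass_le_of_lt G G _
  have I2 : CovariantClass G G (Function.swap (· * ·)) (· ≤ ·) :=
    covariantClass_le_of_lt G G _
  have hzero : ∀ g : G, (0 : R) ∈ F g := fun g => (hsub g).1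
  refine ⟨fun g hg => rees_single_mem F hzero hF1 hF3 S hS g hg, ?_, ?_, ?_⟩
  · intro g h _ _
    rw [MonoidAlgebra.single_mul_single, one_mul]
  · -- Ore condition
    intro f hf g hg
    set T : Finset G := insert (1 : G) (f.coeff.support.image fun s => s * g * s⁻¹) with hT
    have hTne : T.Nonempty := ⟨1, Finset.mem_insert_self _ _⟩
    set h : G := T.min' hTne with hh
    have hh1 : h ≤ 1 := Finset.min'_le _ _ (Finset.mem_insert_self _ _)
    have hhs : ∀ s ∈ f.coeff.support, h ≤ s * g * s⁻¹ := fun s hs =>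
      Finset.min'_le _ _ (Finset.mem_insert_of_mem (Finset.mem_image_of_mem _ hs))
    refine ⟨h, hh1, (MonoidAlgebra.single h (1:R) : MonoidAlgebra R G) * f * MonoidAlgebra.single g⁻¹ 1, ?_, ?_⟩
    · rw [hS]
      intro t
      have hco : ((MonoidAlgebra.single h (1:R) * f * MonoidAlgebra.single g⁻¹ 1 : MonoidAlgebra R G) : MonoidAlgebra R G).coeff t
          = f.coeff (h⁻¹ * (t * g)) := by
        rw [MonoidAlgebra.mul_single_apply, MonoidAlgebra.single_mul_apply,
          inv_inv, one_mul, mul_one]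
      rw [hco]
      set s : G := h⁻¹ * (t * g) with hsdef
      by_cases hfs : f.coeff s = 0
      · rw [hfs]; exact hzero t
      · have hsm : s ∈ f.coeff.support := Finsupp.mem_support_iff.mpr hfs
        have hts : t ≤ s := by
          have h1 : h ≤ s * g * s⁻¹ := hhs s hsm
          have h2 : h * (s * g * s⁻¹)⁻¹ ≤ 1 := by
            calc h * (s * g * s⁻¹)⁻¹ ≤ (s * g * s⁻¹) * (s * g * s⁻¹)⁻¹ :=
                  mul_le_mul_left h1 _
              _ = 1 := mul_inv_cancel _
          have ht : t = h * s * g⁻¹ := by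
            rw [hsdef]; group
          rw [ht]
          calc h * s * g⁻¹ = (h * (s * g * s⁻¹)⁻¹) * s := by group
            _ ≤ 1 * s := mul_le_mul_left h2 s
            _ = s := one_mul s
        exact hF1 t s hts ((hS f).mp hf s)
    · rw [mul_assoc, MonoidAlgebra.single_mul_single, one_mul, inv_mul_cancel]
      rw [show (MonoidAlgebra.single (1:G) (1:R) : MonoidAlgebra R G) = 1 from rfl, mul_one]
  · -- every element is a left fraction
    intro f
    set k : G → G := fun s => Classical.choose (hF4 (f.coeff s)) with hk
    have hks : ∀ s, f.coeff s ∈ F (k s) := fun s => Classical.choose_spec (hF4 (f.coeff s))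
    set T : Finset G := insert (1 : G) (f.coeff.support.image fun s => k s * s⁻¹) with hT
    have hTne : T.Nonempty := ⟨1, Finset.mem_insert_self _ _⟩
    set g : G := T.min' hTne with hg
    have hg1 : g ≤ 1 := Finset.min'_le _ _ (Finset.mem_insert_self _ _)
    have hgs : ∀ s ∈ f.coeff.support, g ≤ k s * s⁻¹ := fun s hs =>
      Finset.min'_le _ _ (Finset.mem_insert_of_mem (Finset.mem_image_of_mem _ hs))
    refine ⟨g, hg1, ?_⟩
    rw [hS]
    intro t
    rw [MonoidAlgebra.single_mul_apply, one_mul]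
    set s : G := g⁻¹ * t with hsdef
    by_cases hfs : f.coeff s = 0
    · rw [hfs]; exact hzero t
    · have hsm : s ∈ f.coeff.support := Finsupp.mem_support_iff.mpr hfs
      have htk : t ≤ k s := by
        have ht : t = g * s := by rw [hsdef]; group
        rw [ht]
        calc g * s ≤ (k s * s⁻¹) * s := mul_le_mul_left (hgs s hsm) s
          _ = k s := by group
      exact hF1 t (k s) htk (hks s)
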